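/- For every z ∈ [0,∞)^d, the recursive max-linear values x on 𝒟 satisfy x_i = max( max_{k ∈ an(i)} (b_{ki}/b_{kk}) x_k , b_{ii} z_i ) for every i ∈ V; that is, the model is also a recursive max-linear model on the transitive closure 𝒟^tc of 𝒟 (the DAG on V with an edge j → i if and only if j ∈ an(i)) with weights c_{ki} = b_{ki}/b_{kk} and c_{ii} = b_{ii}. -/

import Mathlib

open scoped NNReal ENNReal Classical

namespace MaxLinearDAG

variable {d : ℕ}

/-- `p` is a directed path (with at least one edge) from `j` to `i` in the edge relation `E`. -/
def PathFrom (E : Fin d → Fin d → Prop) (j i : Fin d) (p : List (Fin d)) : Prop :=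
  2 ≤ p.length ∧ p.head? = some j ∧ p.getLast? = some i ∧ List.Chain' E p

/-- The directed graph given by `E` is acyclic: no directed path from a node to itself. -/
def Acyclic (E : Fin d → Fin d → Prop) : Prop :=
  ∀ i, ¬ ∃ p, PathFrom E i i p

/-- `j` is an ancestor of `i`: there is a path from `j` to `i`. -/
def anc (E : Fin d → Fin d → Prop) (j i : Fin d) : Prop :=
  ∃ p, PathFrom E j i p

/-- The weight of a path `p` starting at `j`: `c j j` times the product of the
edge weights along `p`. -/
noncomputable def pathWeight (c : Fin d → Fin d → ℝ≥0) (j : Fin d) (p : List (Fin d)) : ℝ≥0 :=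
  c j j * ((p.zip p.tail).map fun q => c q.1 q.2).prod

/-- `b` is the max-linear coefficient matrix of the recursive ML model on `(E, c)`:
for `j ∈ an(i)`, `b j i` is the (attained) maximum of the path weights over all paths
from `j` to `i`; `b i i = c i i`; and `b j i = 0` for `j ∉ An(i)`. -/
def IsMLMatrix (E : Fin d → Fin d → Prop) (c b : Fin d → Fin d → ℝ≥0) : Prop :=
  (∀ i, b i i = c i i) ∧
  (∀ j i, j ≠ i → ¬ anc E j i → b j i = 0) ∧
  (∀ j i p, PathFrom E j i p → pathWeight c j p ≤ b j i) ∧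
  (∀ j i, anc E j i → ∃ p, PathFrom E j i p ∧ pathWeight c j p = b j i)

/-- `x` is the vector of recursive max-linear values on `(E, c)` for noise `z`:
`x i = max (max_{k ∈ pa(i)} c k i * x k) (c i i * z i)`, empty max being `0`. -/
def IsRecML (E : Fin d → Fin d → Prop) (c : Fin d → Fin d → ℝ≥0) (z x : Fin d → ℝ≥0) : Prop :=
  ∀ i, x i = (Finset.univ.sup fun k => if E k i then c k i * x k else 0) ⊔ c i i * z i

/-- Max-times matrix product `F ⊙ G`. -/
noncomputable def mprod (F G : Fin d → Fin d → ℝ≥0) : Fin d → Fin d → ℝ≥0 :=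
  fun i j => Finset.univ.sup fun k => F i k * G k j

/-- Max-times matrix power, `mpow A 0` being the identity matrix. -/
noncomputable def mpow (A : Fin d → Fin d → ℝ≥0) : ℕ → Fin d → Fin d → ℝ≥0
  | 0 => fun i j => if i = j then 1 else 0
  | n + 1 => mprod (mpow A n) A

/-- `p` is a max-weighted path from `j` to `i`. -/
def MaxWeighted (E : Fin d → Fin d → Prop) (c b : Fin d → Fin d → ℝ≥0)
    (j i : Fin d) (p : List (Fin d)) : Prop :=
  PathFrom E j i p ∧ pathWeight c j p = b j i

/-- The lowest max-weighted ancestors of `i` in `U`: nodes `j ∈ An(i) ∩ U` such that no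
max-weighted path from `j` to `i` passes through a node of `U \ {j}`. -/
def AnLow (E : Fin d → Fin d → Prop) (c b : Fin d → Fin d → ℝ≥0)
    (U : Set (Fin d)) (i : Fin d) : Set (Fin d) :=
  {j | (anc E j i ∨ j = i) ∧ j ∈ U ∧
    ∀ p, MaxWeighted E c b j i p → ¬ ∃ u ∈ U \ {j}, u ∈ p}

/-- The highest max-weighted descendants of `i` in `U`: nodes `l ∈ De(i) ∩ U` such that no
max-weighted path from `i` to `l` passes through a node of `U \ {l}`. -/
def DeHigh (E : Fin d → Fin d → Prop) (c b : Fin d → Fin d → ℝ≥0)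
    (U : Set (Fin d)) (i : Fin d) : Set (Fin d) :=
  {l | (anc E i l ∨ l = i) ∧ l ∈ U ∧
    ∀ p, MaxWeighted E c b i l p → ¬ ∃ u ∈ U \ {l}, u ∈ p}

/-- For every `z`, the recursive max-linear values `x` on `𝒟` satisfy
`x i = max (max_{k ∈ an(i)} (b k i / b k k) * x k) (b i i * z i)` for every `i`; that is,
the model is also a recursive max-linear model on the transitive closure of `𝒟` with
weights `c k i = b k i / b k k` and `c i i = b i i`. -/
lemma edge_le {E : Fin d → Fin d → Prop} {c : Fin d → Fin d → ℝ≥0} {z x : Fin d → ℝ≥0}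
    (hx : IsRecML E c z x) {k i : Fin d} (h : E k i) : c k i * x k ≤ x i := by
  rw [hx i]
  refine le_sup_of_le_left ?_
  have := Finset.le_sup (f := fun k => if E k i then c k i * x k else 0)
    (Finset.mem_univ k)
  simpa [h] using this

lemma path_le {E : Fin d → Fin d → Prop} {c : Fin d → Fin d → ℝ≥0} {z x : Fin d → ℝ≥0}
    (hx : IsRecML E c z x) :
    ∀ p (j i : Fin d), PathFrom E j i p →
      ((p.zip p.tail).map fun q => c q.1 q.2).prod * x j ≤ x i := by
  intro p
  induction p with
  | nil => intro j i hp; simp [PathFrom] at hp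
  | cons a t ih =>
    intro j i hp
    obtain ⟨hlen, hhead, hlast, hchain⟩ := hp
    cases t with
    | nil => simp at hlen
    | cons k t' =>
      have haj : a = j := by simpa using hhead
      subst haj
      rw [List.Chain', List.isChain_cons_cons] at hchain
      obtain ⟨hak, hchain'⟩ := hchain
      cases t' with
      | nil =>
        have hki : k = i := by simpa [List.getLast?] using hlast
        subst hki
        simpa using edge_le hx hak
      | cons m t'' =>
        have hlast' : (k :: m :: t'').getLast? = some i := by
          simpa [List.getLast?_cons_cons] using hlast
        have hrec := ih k i ⟨by simp, by simp, hlast', hchain'⟩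
        have hstep : c a k * x a ≤ x k := edge_le hx hak
        calc ((((a :: k :: m :: t'').zip (k :: m :: t'')).map
                fun q => c q.1 q.2).prod) * x a
            = (((k :: m :: t'').zip ((k :: m :: t'').tail)).map
                fun q => c q.1 q.2).prod * (c a k * x a) := by
              simp [List.zip_cons_cons, mul_comm, mul_assoc, mul_left_comm]
          _ ≤ (((k :: m :: t'').zip ((k :: m :: t'').tail)).map
                fun q => c q.1 q.2).prod * x k :=
              mul_le_mul_right hstep _
          _ ≤ x i := hrec

theorem stmt13 {d : ℕ} (hd : 1 ≤ d) (E : Fin d → Fin d → Prop) (hE : Acyclic E)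
    (c : Fin d → Fin d → ℝ≥0) (hcd : ∀ i, 0 < c i i) (hce : ∀ k i, E k i → 0 < c k i)
    (b : Fin d → Fin d → ℝ≥0) (hb : IsMLMatrix E c b)
    (z x : Fin d → ℝ≥0) (hx : IsRecML E c z x) :
    ∀ i, x i =
      (Finset.univ.sup fun k => if anc E k i then (b k i / b k k) * x k else 0) ⊔
        b i i * z i := by
  obtain ⟨hb1, hb2, hb3, hb4⟩ := hb
  intro i
  apply le_antisymm
  · -- x i ≤ RHS
    rw [hx i]
    apply sup_le_sup
    · apply Finset.sup_le
      intro k _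
      by_cases hk : E k i
      · have hanc : anc E k i := ⟨[k, i], by simp [PathFrom], by simp, by simp [List.getLast?], List.isChain_pair.2 hk⟩
        have hpw : pathWeight c k [k, i] ≤ b k i := hb3 k i _ ⟨by simp [PathFrom], by simp, by simp [List.getLast?], List.isChain_pair.2 hk⟩
        have hle : c k i ≤ b k i / b k k := by
          rw [hb1 k, le_div_iff₀ (hcd k)]
          calc c k i * c k k = pathWeight c k [k, i] := by
                simp [pathWeight, List.zip_cons_cons, mul_comm]
            _ ≤ b k i := hpw
        have := Finset.le_sup (f := fun k => if anc E k i then (b k i / b k k) * x k else 0)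
          (Finset.mem_univ k)
        simp only [hk, hanc, if_true]
        exact le_trans (mul_le_mul_left hle _) (by simpa [hanc] using this)
      · simp [hk]
    · rw [hb1 i]
  · -- RHS ≤ x i
    apply sup_le
    · apply Finset.sup_le
      intro k _
      by_cases hk : anc E k i
      · simp only [hk, if_true]
        obtain ⟨p, hp, hpw⟩ := hb4 k i hk
        have hdiv : b k i / b k k =
            ((p.zip p.tail).map fun q => c q.1 q.2).prod := by
          rw [← hpw, hb1 k, pathWeight]
          exact mul_div_cancel_left₀ _ (hcd k).ne'
        rw [hdiv]
        exact path_le hx p k i hp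
      · simp [hk]
    · rw [hb1 i, hx i]
      exact le_sup_right
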